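/- The sets Π_n^* and Ω_n^* are equal: every n-tuple (μ_0, μ_1, ..., μ_{n-1}) of pairwise non-intersecting large Schröder paths with μ_i from (-2i,0) to (2i,0) consists entirely of small Schröder paths (no level steps on the x-axis). -/

import Mathlib

open Matrix

/-- A lattice point in the plane. -/
abbrev Pt := ℤ × ℤ

/-- The points visited by a path starting at `p` taking steps `l`. -/
def pts (p : Pt) (l : List Pt) : List Pt := l.scanl (· + ·) p

/-- The endpoint of a path starting at `p` taking steps `l`. -/
def endpt (p : Pt) (l : List Pt) : Pt := l.foldl (· + ·) p

/-- `l` is the step list of a large Schröder path from `p` to `q`: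
steps are U=(1,1), D=(1,-1), L=(2,0) and the path never goes below the x-axis. -/
def IsLargePath (p q : Pt) (l : List Pt) : Prop :=
  (∀ s ∈ l, s = (1, 1) ∨ s = (1, -1) ∨ s = (2, 0)) ∧
  (∀ v ∈ pts p l, 0 ≤ v.2) ∧
  endpt p l = q

/-- A small Schröder path: a large Schröder path with no level step on the x-axis. -/
def IsSmallPath (p q : Pt) (l : List Pt) : Prop :=
  IsLargePath p q l ∧
  ∀ (i : ℕ) (h : i < l.length), l.get ⟨i, h⟩ = (2, 0) → (endpt p (l.take i)).2 ≠ 0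

/-- The `k`-th large Schröder number: the number of large Schröder paths
from `(0,0)` to `(2k,0)`. -/
noncomputable def schR (k : ℕ) : ℕ := Nat.card {l : List Pt // IsLargePath (0, 0) (2 * k, 0) l}

/-- The `k`-th small Schröder number: the number of small Schröder paths
from `(0,0)` to `(2k,0)`. -/
noncomputable def schS (k : ℕ) : ℕ := Nat.card {l : List Pt // IsSmallPath (0, 0) (2 * k, 0) l}

/-- `Π n`: `n`-tuples of pairwise non-intersecting large Schröder paths where the
`i`-th path (1-indexed; here index `i : Fin n` stands for `i+1`) runs from
`(-2(i+1)+1, 0)` to `(2(i+1)-1, 0)`. -/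
def PiSet (n : ℕ) : Set (Fin n → List Pt) :=
  {π | (∀ i : Fin n, IsLargePath (-(2 * (i : ℤ) + 1), 0) (2 * (i : ℤ) + 1, 0) (π i)) ∧
    ∀ i j : Fin n, i ≠ j → ∀ v ∈ pts (-(2 * (i : ℤ) + 1), 0) (π i),
      v ∉ pts (-(2 * (j : ℤ) + 1), 0) (π j)}

/-- `Ω n`: the analogous tuples of small Schröder paths. -/
def OmegaSet (n : ℕ) : Set (Fin n → List Pt) :=
  {ω | (∀ i : Fin n, IsSmallPath (-(2 * (i : ℤ) + 1), 0) (2 * (i : ℤ) + 1, 0) (ω i)) ∧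
    ∀ i j : Fin n, i ≠ j → ∀ v ∈ pts (-(2 * (i : ℤ) + 1), 0) (ω i),
      v ∉ pts (-(2 * (j : ℤ) + 1), 0) (ω j)}

/-- `Π* n`: `n`-tuples `(μ₀,…,μ_{n-1})` of pairwise non-intersecting large Schröder
paths with `μ i` from `(-2i,0)` to `(2i,0)`. -/
def PiStarSet (n : ℕ) : Set (Fin n → List Pt) :=
  {μ | (∀ i : Fin n, IsLargePath (-(2 * (i : ℤ)), 0) (2 * (i : ℤ), 0) (μ i)) ∧
    ∀ i j : Fin n, i ≠ j → ∀ v ∈ pts (-(2 * (i : ℤ)), 0) (μ i),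
      v ∉ pts (-(2 * (j : ℤ)), 0) (μ j)}

/-- `Ω* n`: the analogous tuples of small Schröder paths. -/
def OmegaStarSet (n : ℕ) : Set (Fin n → List Pt) :=
  {μ | (∀ i : Fin n, IsSmallPath (-(2 * (i : ℤ)), 0) (2 * (i : ℤ), 0) (μ i)) ∧
    ∀ i j : Fin n, i ≠ j → ∀ v ∈ pts (-(2 * (i : ℤ)), 0) (μ i),
      v ∉ pts (-(2 * (j : ℤ)), 0) (μ j)}

/-- The unit square with lower-left corner `c` lies in the Aztec diamond `Az(n)`,
i.e. all four of its corners `(x,y)` satisfy `|x| + |y| ≤ n + 1`. -/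
def aztecCell (n : ℕ) (c : Pt) : Prop :=
  |c.1| + |c.2| ≤ (n : ℤ) + 1 ∧ |c.1 + 1| + |c.2| ≤ (n : ℤ) + 1 ∧
  |c.1| + |c.2 + 1| ≤ (n : ℤ) + 1 ∧ |c.1 + 1| + |c.2 + 1| ≤ (n : ℤ) + 1

/-- Two unit squares (given by lower-left corners) are edge-adjacent,
so together they form a 1×2 or 2×1 domino. -/
def adjCell (c d : Pt) : Prop :=
  d = (c.1 + 1, c.2) ∨ d = (c.1 - 1, c.2) ∨ d = (c.1, c.2 + 1) ∨ d = (c.1, c.2 - 1)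

/-- A domino tiling of `Az(n)`, encoded as the involution matching each cell of the
diamond with the other cell of its domino (and fixing everything outside). -/
def IsAztecTiling (n : ℕ) (m : Pt → Pt) : Prop :=
  (∀ c, aztecCell n c → aztecCell n (m c) ∧ adjCell c (m c) ∧ m (m c) = c) ∧
  ∀ c, ¬ aztecCell n c → m c = c

/-- The number of domino tilings of the Aztec diamond of order `n`. -/
noncomputable def aztecTilingCount (n : ℕ) : ℕ := Nat.card {m : Pt → Pt // IsAztecTiling n m}

/-- The map sending `(π₁,…,π_{n-1})` to `(μ₀,…,μ_{n-1})` with `μ₀` the empty path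
at the origin and `μᵢ = U πᵢ D`. -/
def extendStar {n : ℕ} (π : Fin (n - 1) → List Pt) (i : Fin n) : List Pt :=
  if h : (i : ℕ) = 0 then []
  else (1, 1) :: π ⟨(i : ℕ) - 1, by omega⟩ ++ [(1, -1)]


lemma pts_cons (p s : Pt) (l : List Pt) : pts p (s :: l) = p :: pts (p + s) l := by
  rw [pts, pts, List.scanl_cons]

lemma endpt_cons (p s : Pt) (l : List Pt) : endpt p (s :: l) = endpt (p + s) l := rfl

lemma start_mem_pts (p : Pt) (l : List Pt) : p ∈ pts p l := by
  cases l <;> simp [pts]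

lemma take_endpt_mem_pts (l : List Pt) : ∀ (p : Pt) (k : ℕ), endpt p (l.take k) ∈ pts p l := by
  induction l with
  | nil => intro p k; simp [endpt, pts, List.scanl]
  | cons s l ih =>
    intro p k
    cases k with
    | zero => simpa [endpt] using start_mem_pts p (s :: l)
    | succ k =>
      rw [List.take_succ_cons, endpt_cons, pts_cons]
      exact List.mem_cons_of_mem _ (ih _ _)

lemma endpt_mem_pts (p : Pt) (l : List Pt) : endpt p l ∈ pts p l := by
  simpa using take_endpt_mem_pts l p l.length

lemma pts_x_bounds (l : List Pt) : ∀ p : Pt, (∀ s ∈ l, 1 ≤ s.1) →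
    ∀ v ∈ pts p l, p.1 ≤ v.1 ∧ v.1 ≤ (endpt p l).1 := by
  induction l with
  | nil => intro p _ v hv; simp [pts, List.scanl] at hv; simp [hv, endpt]
  | cons s l ih =>
    intro p hs v hv
    rw [pts_cons, List.mem_cons] at hv
    have hs1 : 1 ≤ s.1 := hs s (List.mem_cons_self)
    have hps : (p + s).1 = p.1 + s.1 := rfl
    rcases hv with hv | hv
    · rw [hv]
      have h2 := (ih (p + s) (fun t ht => hs t (List.mem_cons_of_mem _ ht))
        (p + s) (start_mem_pts _ _)).2
      rw [endpt_cons]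
      constructor
      · exact le_refl _
      · omega
    · have h2 := ih (p + s) (fun t ht => hs t (List.mem_cons_of_mem _ ht)) v hv
      rw [endpt_cons]
      constructor
      · omega
      · exact h2.2

lemma pts_parity (l : List Pt) : ∀ p : Pt,
    (∀ s ∈ l, s = (1, 1) ∨ s = (1, -1) ∨ s = (2, 0)) →
    ∀ v ∈ pts p l, (v.1 + v.2 - p.1 - p.2) % 2 = 0 := by
  induction l with
  | nil => intro p _ v hv; simp [pts, List.scanl] at hv; simp [hv]
  | cons s l ih =>
    intro p hs v hv
    rw [pts_cons, List.mem_cons] at hv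
    rcases hv with hv | hv
    · subst hv; omega
    · have h2 := ih (p + s) (fun t ht => hs t (List.mem_cons_of_mem _ ht)) v hv
      rcases hs s (List.mem_cons_self) with rfl | rfl | rfl <;>
        · simp only [Prod.fst_add, Prod.snd_add] at h2
          omega

lemma endpt_take_succ (p : Pt) (l : List Pt) (t : ℕ) (h : t < l.length) :
    endpt p (l.take (t + 1)) = endpt p (l.take t) + l.get ⟨t, h⟩ := by
  rw [List.take_succ, show l[t]? = some l[t] from List.getElem?_eq_getElem h]
  simp only [Option.toList_some, endpt, List.foldl_append, List.foldl_cons, List.foldl_nil]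
  rfl

/-- `Π_n^* = Ω_n^*`: every tuple of pairwise non-intersecting large Schröder
paths with `μ_i` from `(-2i,0)` to `(2i,0)` consists of small Schröder paths. -/
theorem piStar_eq_omegaStar (n : ℕ) :
    PiStarSet n = OmegaStarSet n := by
  ext μ
  constructor
  · rintro ⟨hlp, hni⟩
    refine ⟨fun i => ⟨hlp i, ?_⟩, hni⟩
    intro t ht hstep hy0
    obtain ⟨hsteps, hnonneg, hend⟩ := hlp i
    set p : Pt := (-(2 * (i : ℤ)), 0) with hp
    set l : List Pt := μ i with hl
    set a : Pt := endpt p (l.take t) with ha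
    have ha_mem : a ∈ pts p l := take_endpt_mem_pts l p t
    have ha'_eq : endpt p (l.take (t + 1)) = a + (2, 0) := by
      rw [endpt_take_succ p l t ht, hstep]
    have ha'_mem : a + (2, 0) ∈ pts p l := ha'_eq ▸ take_endpt_mem_pts l p (t + 1)
    have hsteps1 : ∀ s ∈ l, (1 : ℤ) ≤ s.1 := by
      intro s hs
      rcases hsteps s hs with rfl | rfl | rfl <;> norm_num
    have hb1 := pts_x_bounds l p hsteps1 a ha_mem
    have hb2 := pts_x_bounds l p hsteps1 (a + (2, 0)) ha'_mem
    have hpar := pts_parity l p hsteps a ha_mem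
    rw [hend] at hb1 hb2
    have hp1 : p.1 = -(2 * (i : ℤ)) := rfl
    have hp2 : p.2 = 0 := rfl
    have ha2 : (a + (2, 0)).1 = a.1 + 2 := rfl
    -- bounds and parity in usable form
    have hlow : -(2 * (i : ℤ)) ≤ a.1 := by rw [← hp1]; exact hb1.1
    have hhigh : a.1 + 2 ≤ 2 * (i : ℤ) := by rw [← ha2]; exact hb2.2
    have heven : a.1 % 2 = 0 := by
      rw [hp1, hp2, hy0] at hpar; omega
    have hi1 : 1 ≤ (i : ℤ) := by omega
    set x : ℤ := if a.1 = -(2 * (i : ℤ)) then a.1 + 2 else a.1 with hx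
    have hxlt : -(2 * (i : ℤ)) < x ∧ x < 2 * (i : ℤ) ∧ x % 2 = 0 := by
      rw [hx]; split <;> omega
    have hx_mem : (x, 0) ∈ pts p l := by
      rw [hx]; split
      · have : (a.1 + 2, (0 : ℤ)) = a + (2, 0) := by
          ext <;> simp [hy0]
        rw [this]; exact ha'_mem
      · have : (a.1, (0 : ℤ)) = a := by ext <;> simp [hy0]
        rw [this]; exact ha_mem
    set j : ℕ := (x / 2).natAbs with hj
    have hxdiv : x = 2 * (x / 2) := by omega
    have hjabs : (x / 2) = (j : ℤ) ∨ (x / 2) = -(j : ℤ) := Int.natAbs_eq _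
    have hjlt : j < (i : ℕ) := by
      have : ((j : ℤ)) < (i : ℤ) := by rcases hjabs with h | h <;> omega
      exact_mod_cast this
    set jf : Fin n := ⟨j, lt_trans hjlt i.isLt⟩ with hjf
    have hne : i ≠ jf := by
      intro hc
      rw [hc] at hjlt
      exact lt_irrefl _ hjlt
    have hjfz : ((jf : ℕ) : ℤ) = (j : ℤ) := rfl
    obtain ⟨hsteps', hnonneg', hend'⟩ := hlp jf
    have hx_mem_j : (x, 0) ∈ pts (-(2 * (jf : ℤ)), 0) (μ jf) := by
      rcases hjabs with h | h
      · have hxe : (x, (0 : ℤ)) = (2 * (jf : ℤ), 0) := by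
          rw [Prod.mk.injEq]; constructor
          · rw [hjfz]; omega
          · rfl
        rw [hxe, ← hend']
        exact endpt_mem_pts _ _
      · have hxe : (x, (0 : ℤ)) = (-(2 * (jf : ℤ)), 0) := by
          rw [Prod.mk.injEq]; constructor
          · rw [hjfz]; omega
          · rfl
        rw [hxe]
        exact start_mem_pts _ _
    exact hni i jf hne (x, 0) hx_mem hx_mem_j
  · rintro ⟨hsp, hni⟩
    exact ⟨fun i => (hsp i).1, hni⟩
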